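/- For x > 1, the expression (ln x)² - 2x + 2 + 2·ln x is strictly negative. -/

import Mathlib

lemma key_exp_bound (s : ℝ) (hs : 0 < s) : s^2 + 2*s + 2 < 2*Real.exp s := by
  set f : ℝ → ℝ := fun s => 2*Real.exp s - (s^2 + 2*s + 2) with hf
  have hderiv : ∀ t : ℝ, HasDerivAt f (2*Real.exp t - (2*t + 2)) t := by
    intro t
    have h1 : HasDerivAt (fun s : ℝ => 2*Real.exp s) (2*Real.exp t) t :=
      (Real.hasDerivAt_exp t).const_mul 2
    have h2 : HasDerivAt (fun s : ℝ => s^2 + 2*s + 2) (2*t + 2) t := by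
      have h := ((hasDerivAt_pow 2 t).add (((hasDerivAt_id t).const_mul 2).add
          (hasDerivAt_const t 2)))
      simpa [add_assoc, Pi.add_def] using h
    simpa [Pi.sub_def] using h1.sub h2
  have hmono : StrictMonoOn f (Set.Ici (0:ℝ)) := by
    apply strictMonoOn_of_deriv_pos (convex_Ici 0)
    · exact Continuous.continuousOn (by continuity)
    · intro t ht
      rw [interior_Ici] at ht
      rw [(hderiv t).deriv]
      have := Real.add_one_lt_exp (ne_of_gt ht)
      linarith
  have h0 : f 0 < f s := hmono (Set.self_mem_Ici) (le_of_lt hs) hs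
  simp [hf, Real.exp_zero] at h0
  linarith [h0]

theorem stmt_12 (x : ℝ) (hx : 1 < x) :
    (Real.log x)^2 - 2*x + 2 + 2*Real.log x < 0 := by
  have ht0 : 0 < Real.log x := Real.log_pos hx
  have hx' : Real.exp (Real.log x) = x := Real.exp_log (by linarith)
  have := key_exp_bound (Real.log x) ht0
  rw [hx'] at this
  linarith
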